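/- Let n ∈ ℕ with n ≥ 3, let 𝒯=(T,w) be a positive-weighted tree with exactly n vertices, labelled 1,…,n, and define D_{î} = D_{[n]∖{i}}(𝒯) for each i ∈ [n]. Then: (i) for every i ∈ [n], (n−2)·D_{î} ≤ Σ_{j ∈ [n]∖{i}} D_{ĵ}, and at most one of these n inequalities is an equality; (ii) either one of these inequalities is an equality, or the maximum of {D_{î}}_{i ∈ [n]} is achieved by at least two indices; (iii) the maximum of {D_{î}}_{i ∈ [n]} is achieved by at most n−2 indices. -/

import Mathlib

open SimpleGraph Finset

/-- The total weight of a subgraph: the sum of the weights of its edges. -/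
noncomputable def subgraphWeight {V : Type} [Fintype V] {G : SimpleGraph V}
    (w : Sym2 V → ℝ) (R : G.Subgraph) : ℝ :=
  ∑ e ∈ (Set.toFinite R.edgeSet).toFinset, w e

/-- `graphDist G w I` is the minimum of `subgraphWeight w R` over connected
subgraphs `R` of `G` whose vertex set contains `I`. -/
noncomputable def graphDist {V : Type} [Fintype V] (G : SimpleGraph V)
    (w : Sym2 V → ℝ) (I : Set V) : ℝ :=
  sInf { x : ℝ | ∃ R : G.Subgraph, R.Connected ∧ I ⊆ R.verts ∧ subgraphWeight w R = x }

/-- A weight function is positive on a graph if every edge has positive weight. -/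
def PosWeighted {V : Type} (G : SimpleGraph V) (w : Sym2 V → ℝ) : Prop :=
  ∀ e ∈ G.edgeSet, 0 < w e

/-- `Dhat G w i` is the `(n-1)`-weight `D_{[n]∖{i}}(𝒢)` for a graph on vertex
set `Fin n`. -/
noncomputable def Dhat {n : ℕ} (G : SimpleGraph (Fin n)) (w : Sym2 (Fin n) → ℝ)
    (i : Fin n) : ℝ :=
  graphDist G w {j | j ≠ i}


section Aux

variable {n : ℕ} {T : SimpleGraph (Fin n)}

private lemma exists_two_nbrs {u v i : Fin n} (p : T.Walk u v) (hp : p.IsPath)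
    (hi : i ∈ p.support) (hu : i ≠ u) (hv : i ≠ v) :
    ∃ x y : Fin n, x ≠ y ∧ T.Adj i x ∧ T.Adj i y := by
  induction p with
  | nil =>
    rw [SimpleGraph.Walk.support_nil, List.mem_singleton] at hi
    exact absurd hi hu
  | @cons a b c h q ih =>
    rw [SimpleGraph.Walk.support_cons, List.mem_cons] at hi
    rw [SimpleGraph.Walk.cons_isPath_iff] at hp
    rcases hi with rfl | hi
    · exact absurd rfl hu
    by_cases hib : i = b
    · subst hib
      have hnil : ¬ q.Nil := SimpleGraph.Walk.not_nil_of_ne hv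
      have hlen : 0 < q.length := SimpleGraph.Walk.not_nil_iff_lt_length.mp hnil
      refine ⟨a, q.getVert 1, ?_, h.symm, SimpleGraph.Walk.adj_snd hnil⟩
      intro hag
      apply hp.2
      rw [hag]
      exact SimpleGraph.Walk.mem_support_iff_exists_getVert.mpr ⟨1, rfl, hlen⟩
    · exact ih hp.1 hi hib hv

private lemma two_le_degree_of_two_nbrs [DecidableRel T.Adj] {i x y : Fin n}
    (hxy : x ≠ y) (hx : T.Adj i x) (hy : T.Adj i y) : 2 ≤ T.degree i := by
  rw [← card_neighborFinset_eq_degree]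
  exact Finset.one_lt_card.mpr
    ⟨x, (mem_neighborFinset _ _ _).mpr hx, y, (mem_neighborFinset _ _ _).mpr hy, hxy⟩

private lemma degree_pos_aux [DecidableRel T.Adj] (hT : T.Connected) (hn2 : 2 ≤ n)
    (i : Fin n) : 0 < T.degree i := by
  obtain ⟨j, hj⟩ := Fintype.exists_ne_of_one_lt_card (by simp; omega) i
  obtain ⟨p⟩ := hT.preconnected i j
  have hnil : ¬ p.Nil := SimpleGraph.Walk.not_nil_of_ne (Ne.symm hj)
  exact (T.degree_pos_iff_exists_adj i).mpr ⟨_, SimpleGraph.Walk.adj_snd hnil⟩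

private lemma eq_nbr_of_leaf [DecidableRel T.Adj] {i x y : Fin n}
    (hdeg : T.degree i = 1) (hx : T.Adj i x) (hy : T.Adj i y) : x = y := by
  have h1 : (T.neighborFinset i).card ≤ 1 := by
    rw [card_neighborFinset_eq_degree, hdeg]
  exact Finset.card_le_one.mp h1 x ((mem_neighborFinset _ _ _).mpr hx) y
    ((mem_neighborFinset _ _ _).mpr hy)

private lemma not_adj_leaves [DecidableRel T.Adj] (hT : T.IsTree) (hn : 3 ≤ n)
    {j k : Fin n} (hjk : T.Adj j k) (hj : T.degree j = 1) (hk : T.degree k = 1) :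
    False := by
  classical
  obtain ⟨m, hm⟩ : ∃ m : Fin n, m ∉ ({j, k} : Finset (Fin n)) := by
    have hcard : ({j, k} : Finset (Fin n)).card ≤ 2 :=
      (Finset.card_insert_le _ _).trans (by simp)
    have : (({j, k} : Finset (Fin n))ᶜ).Nonempty := by
      rw [← Finset.card_pos, Finset.card_compl]
      have : Fintype.card (Fin n) = n := Fintype.card_fin n
      omega
    obtain ⟨m, hm⟩ := this
    exact ⟨m, Finset.mem_compl.mp hm⟩
  simp only [Finset.mem_insert, Finset.mem_singleton, not_or] at hm
  obtain ⟨hmj, hmk⟩ := hm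
  obtain ⟨p, hp, -⟩ := hT.existsUnique_path m j
  have hpr : (p.reverse).IsPath := hp.reverse
  have hnil : ¬ p.reverse.Nil := SimpleGraph.Walk.not_nil_of_ne (fun h => hmj h.symm)
  have hlen : 0 < p.reverse.length := SimpleGraph.Walk.not_nil_iff_lt_length.mp hnil
  have hadj : T.Adj j (p.reverse.getVert 1) := SimpleGraph.Walk.adj_snd hnil
  have hxk : p.reverse.getVert 1 = k := eq_nbr_of_leaf hj hadj hjk
  have hkmem : k ∈ p.reverse.support := by
    rw [← hxk]
    exact SimpleGraph.Walk.mem_support_iff_exists_getVert.mpr ⟨1, rfl, hlen⟩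
  obtain ⟨x, y, hxy, hx, hy⟩ := exists_two_nbrs p.reverse hpr hkmem hjk.ne' (fun h => hmk h.symm)
  have := two_le_degree_of_two_nbrs hxy hx hy
  omega


private lemma reach_induce {s : Set (Fin n)} :
    ∀ {u v : Fin n} (p : T.Walk u v), (∀ x ∈ p.support, x ∈ s) →
    ∀ (hu : u ∈ s) (hv : v ∈ s),
      (((⊤ : T.Subgraph).induce s).coe).Reachable ⟨u, hu⟩ ⟨v, hv⟩
  | u, _, .nil, _, hu, hv => Reachable.refl _
  | u, v, @SimpleGraph.Walk.cons _ _ _ b _ h q, hs, hu, hv => by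
      have hb : b ∈ s := hs b (by simp)
      have hadj : (((⊤ : T.Subgraph).induce s)).Adj u b := ⟨hu, hb, by simpa using h⟩
      have hcadj : (((⊤ : T.Subgraph).induce s).coe).Adj ⟨u, hu⟩ ⟨b, hb⟩ := hadj
      exact Reachable.trans hcadj.reachable
        (reach_induce q (fun x hx => hs x (by simp [hx])) hb hv)

private lemma exists_path_in_subgraph {R : T.Subgraph} (hR : R.Connected)
    {u v : Fin n} (hu : u ∈ R.verts) (hv : v ∈ R.verts) :
    ∃ p : T.Walk u v, p.IsPath ∧ (∀ x ∈ p.support, x ∈ R.verts) ∧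
      (∀ e ∈ p.edges, e ∈ R.edgeSet) := by
  obtain ⟨q⟩ := hR.preconnected ⟨u, hu⟩ ⟨v, hv⟩
  let q' : T.Walk u v := q.map R.hom
  refine ⟨q'.toPath, (q'.toPath).2, ?_, ?_⟩
  · intro x hx
    have hx' : x ∈ q'.support := SimpleGraph.Walk.support_toPath_subset q' hx
    rw [show q'.support = q.support.map R.hom from
      SimpleGraph.Walk.support_map (f := R.hom) (p := q)] at hx'
    obtain ⟨y, -, rfl⟩ := List.mem_map.mp hx'
    exact y.2
  · intro e he
    have he' : e ∈ q'.edges := SimpleGraph.Walk.edges_toPath_subset q' he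
    rw [show q'.edges = q.edges.map (Sym2.map R.hom) from
      SimpleGraph.Walk.edges_map (f := R.hom) (p := q)] at he'
    obtain ⟨f', hf', rfl⟩ := List.mem_map.mp he'
    have key : ∀ g : Sym2 R.verts, g ∈ q.edges → Sym2.map (R.hom) g ∈ R.edgeSet := by
      intro g
      induction g using Sym2.ind with
      | _ a b =>
        intro hmem
        rw [Sym2.map_pair_eq]
        exact Subgraph.mem_edgeSet.mpr (SimpleGraph.Walk.adj_of_mem_edges q hmem)
    exact key f' hf'

private lemma subgraph_adj (hT : T.IsTree) {R : T.Subgraph} (hR : R.Connected)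
    {u v : Fin n} (hu : u ∈ R.verts) (hv : v ∈ R.verts) (huv : T.Adj u v) :
    R.Adj u v := by
  obtain ⟨p, hp, -, he⟩ := exists_path_in_subgraph hR hu hv
  obtain ⟨q0, -, huniq⟩ := hT.existsUnique_path u v
  have h1 : (SimpleGraph.Path.singleton huv : T.Walk u v).IsPath :=
    (SimpleGraph.Path.singleton huv).2
  have heq : p = (SimpleGraph.Path.singleton huv : T.Walk u v) :=
    (huniq _ hp).trans (huniq _ h1).symm
  have hmem : s(u, v) ∈ p.edges := by
    rw [heq]
    simp [SimpleGraph.Path.singleton]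
  exact Subgraph.mem_edgeSet.mp (he _ hmem)

private lemma internal_mem [DecidableRel T.Adj] (hT : T.IsTree) {R : T.Subgraph}
    (hR : R.Connected) {i : Fin n} (hsub : {j : Fin n | j ≠ i} ⊆ R.verts)
    (hdeg : 2 ≤ T.degree i) : i ∈ R.verts := by
  have : 1 < (T.neighborFinset i).card := by
    rwa [card_neighborFinset_eq_degree]
  obtain ⟨x, hx, y, hy, hxy⟩ := Finset.one_lt_card.mp this
  rw [mem_neighborFinset] at hx hy
  have hxv : x ∈ R.verts := hsub hx.ne'
  have hyv : y ∈ R.verts := hsub hy.ne'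
  obtain ⟨p, hp, hsupp, -⟩ := exists_path_in_subgraph hR hxv hyv
  have hq : (SimpleGraph.Walk.cons hx.symm
      (SimpleGraph.Walk.cons hy .nil) : T.Walk x y).IsPath := by
    rw [SimpleGraph.Walk.isPath_def]
    simp only [SimpleGraph.Walk.support_cons, SimpleGraph.Walk.support_nil]
    simp [List.nodup_cons, hx.ne', hxy, hy.ne]
  obtain ⟨q0, -, huniq⟩ := hT.existsUnique_path x y
  have heq := (huniq _ hp).trans (huniq _ hq).symm
  apply hsupp i
  rw [heq]
  simp

private lemma edgeSet_of_verts_univ (hT : T.IsTree) {R : T.Subgraph} (hR : R.Connected)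
    (h : R.verts = Set.univ) : R.edgeSet = T.edgeSet := by
  apply subset_antisymm R.edgeSet_subset
  intro e he
  induction e using Sym2.ind with
  | _ a b =>
    rw [mem_edgeSet] at he
    exact Subgraph.mem_edgeSet.mpr
      (subgraph_adj hT hR (by simp [h]) (by simp [h]) he)

private lemma edgeSet_of_verts_del (hT : T.IsTree) {R : T.Subgraph} (hR : R.Connected)
    {i : Fin n} (h : R.verts = {j | j ≠ i}) :
    R.edgeSet = {e ∈ T.edgeSet | i ∉ e} := by
  ext e
  induction e using Sym2.ind with
  | _ a b =>
    constructor
    · intro he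
      have hadj := Subgraph.mem_edgeSet.mp he
      have ha : a ∈ R.verts := R.edge_vert hadj
      have hb : b ∈ R.verts := R.edge_vert hadj.symm
      rw [h] at ha hb
      refine ⟨R.edgeSet_subset he, ?_⟩
      rw [Sym2.mem_iff]
      rintro (rfl | rfl)
      · exact ha rfl
      · exact hb rfl
    · rintro ⟨he, hni⟩
      rw [Sym2.mem_iff, not_or] at hni
      rw [mem_edgeSet] at he
      have hav : a ∈ R.verts := by rw [h]; exact fun hai => hni.1 hai.symm
      have hbv : b ∈ R.verts := by rw [h]; exact fun hbi => hni.2 hbi.symm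
      exact Subgraph.mem_edgeSet.mpr (subgraph_adj hT hR hav hbv he)

section Aux3

variable {n : ℕ} {T : SimpleGraph (Fin n)}

private lemma subgraphWeight_eq' (w : Sym2 (Fin n) → ℝ) (R : T.Subgraph)
    (s : Finset (Sym2 (Fin n))) (h : R.edgeSet = ↑s) :
    subgraphWeight w R = ∑ e ∈ s, w e := by
  unfold subgraphWeight
  congr 1
  ext e
  simp [Set.Finite.mem_toFinset, h]

private lemma induce_connected (hne : s.Nonempty)
    (hwalk : ∀ u ∈ s, ∀ v ∈ s, ∃ p : T.Walk u v, ∀ x ∈ p.support, x ∈ s) :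
    ((⊤ : T.Subgraph).induce s).Connected := by
  rw [Subgraph.connected_iff]
  constructor
  · rw [Subgraph.preconnected_iff]
    rintro ⟨u, hu⟩ ⟨v, hv⟩
    obtain ⟨p, hp⟩ := hwalk u hu v hv
    exact reach_induce p hp hu hv
  · simpa using hne

private lemma Dhat_eq [DecidableRel T.Adj] (hn : 3 ≤ n) (hT : T.IsTree)
    {w : Sym2 (Fin n) → ℝ} (hw : PosWeighted T w) (i : Fin n) :
    Dhat T w i = (∑ e ∈ T.edgeFinset, w e) -
      (if T.degree i = 1 then ∑ e ∈ T.edgeFinset.filter (fun e => i ∈ e), w e else 0) := by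
  classical
  apply IsLeast.csInf_eq
  constructor
  · -- membership
    by_cases hdeg : T.degree i = 1
    · rw [if_pos hdeg]
      set R := (⊤ : T.Subgraph).induce {j : Fin n | j ≠ i} with hRdef
      have hRc : R.Connected := by
        apply induce_connected
        · obtain ⟨j, hj⟩ := Fintype.exists_ne_of_one_lt_card (by simp; omega) i
          exact ⟨j, hj⟩
        · intro u hu v hv
          obtain ⟨p, hp, -⟩ := hT.existsUnique_path u v
          refine ⟨p, fun x hx => ?_⟩
          intro hxi
          subst hxi
          obtain ⟨a, b, hab, ha, hb⟩ := exists_two_nbrs p hp hx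
            (fun h => hu h.symm) (fun h => hv h.symm)
          have := two_le_degree_of_two_nbrs hab ha hb
          omega
      have hverts : R.verts = {j : Fin n | j ≠ i} := rfl
      refine ⟨R, hRc, le_of_eq hverts.symm, ?_⟩
      rw [subgraphWeight_eq' w R (T.edgeFinset.filter (fun e => ¬ i ∈ e)) ?_]
      · have := Finset.sum_filter_add_sum_filter_not T.edgeFinset (fun e => i ∈ e) w
        linarith
      · rw [edgeSet_of_verts_del hT hRc hverts]
        ext e
        simp [mem_edgeFinset]
    · rw [if_neg hdeg, sub_zero]
      set R := (⊤ : T.Subgraph).induce (Set.univ : Set (Fin n)) with hRdef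
      have hRc : R.Connected := by
        apply induce_connected
        · exact ⟨i, trivial⟩
        · intro u _ v _
          obtain ⟨p, -, -⟩ := hT.existsUnique_path u v
          exact ⟨p, fun x _ => trivial⟩
      have hverts : R.verts = Set.univ := rfl
      refine ⟨R, hRc, by rw [hverts]; exact Set.subset_univ _, ?_⟩
      rw [subgraphWeight_eq' w R T.edgeFinset ?_]
      rw [edgeSet_of_verts_univ hT hRc hverts, coe_edgeFinset]
  · -- lower bound
    rintro x ⟨R, hR, hsub, rfl⟩
    have hw0 : ∀ e ∈ T.edgeFinset, 0 ≤ w e := fun e he =>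
      (hw e (mem_edgeFinset.mp he)).le
    by_cases hiv : i ∈ R.verts
    · have hverts : R.verts = Set.univ := by
        apply Set.eq_univ_of_forall
        intro j
        by_cases hj : j = i
        · subst hj; exact hiv
        · exact hsub hj
      rw [subgraphWeight_eq' w R T.edgeFinset
        (by rw [edgeSet_of_verts_univ hT hR hverts, coe_edgeFinset])]
      have : (0:ℝ) ≤ (if T.degree i = 1 then
          ∑ e ∈ T.edgeFinset.filter (fun e => i ∈ e), w e else 0) := by
        split
        · exact Finset.sum_nonneg fun e he => hw0 e (Finset.mem_filter.mp he).1
        · exact le_refl 0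
      linarith
    · have hverts : R.verts = {j : Fin n | j ≠ i} := by
        apply subset_antisymm
        · intro j hj
          rintro rfl
          exact hiv hj
        · exact hsub
      have hdeg : T.degree i = 1 := by
        by_contra hne
        have h1 : 0 < T.degree i := degree_pos_aux hT.isConnected (by omega) i
        exact hiv (internal_mem hT hR hsub (by omega))
      rw [if_pos hdeg]
      rw [subgraphWeight_eq' w R (T.edgeFinset.filter (fun e => ¬ i ∈ e)) ?_]
      · have := Finset.sum_filter_add_sum_filter_not T.edgeFinset (fun e => i ∈ e) w
        linarith
      · rw [edgeSet_of_verts_del hT hR hverts]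
        ext e
        simp [mem_edgeFinset]

end Aux3
section Aux4

variable {n : ℕ} {T : SimpleGraph (Fin n)}

private lemma adj_of_two_mem {e : Sym2 (Fin n)} (he : e ∈ T.edgeSet) {j k : Fin n}
    (hj : j ∈ e) (hk : k ∈ e) (hjk : j ≠ k) : T.Adj j k := by
  induction e using Sym2.ind with
  | _ a b =>
    rw [Sym2.mem_iff] at hj hk
    rw [mem_edgeSet] at he
    rcases hj with rfl | rfl <;> rcases hk with rfl | rfl
    · exact absurd rfl hjk
    · exact he
    · exact he.symm
    · exact absurd rfl hjk

private lemma exists_internal [DecidableRel T.Adj] (hn : 3 ≤ n) (hT : T.IsTree) :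
    ∃ c : Fin n, T.degree c ≠ 1 := by
  by_contra h
  push_neg at h
  have hsum := T.sum_degrees_eq_twice_card_edges
  have hcard := hT.card_edgeFinset
  rw [Fintype.card_fin] at hcard
  rw [Finset.sum_congr rfl (fun i _ => h i)] at hsum
  simp only [Finset.sum_const, Finset.card_univ, Fintype.card_fin, smul_eq_mul,
    mul_one] at hsum
  omega

private lemma two_le_card_leaves [DecidableRel T.Adj] (hn : 3 ≤ n) (hT : T.IsTree) :
    2 ≤ (Finset.univ.filter (fun j : Fin n => T.degree j = 1)).card := by
  classical
  have hsum := T.sum_degrees_eq_twice_card_edges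
  have hcard := hT.card_edgeFinset
  rw [Fintype.card_fin] at hcard
  have hsplit := Finset.sum_filter_add_sum_filter_not Finset.univ
    (fun j : Fin n => T.degree j = 1) (fun j => T.degree j)
  have h1 : ∑ j ∈ Finset.univ.filter (fun j : Fin n => T.degree j = 1), T.degree j
      = (Finset.univ.filter (fun j : Fin n => T.degree j = 1)).card := by
    rw [Finset.sum_congr rfl (fun j hj => (Finset.mem_filter.mp hj).2)]
    simp
  have h2 : (Finset.univ.filter (fun j : Fin n => ¬ T.degree j = 1)).card * 2 ≤
      ∑ j ∈ Finset.univ.filter (fun j : Fin n => ¬ T.degree j = 1), T.degree j := by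
    have := Finset.card_nsmul_le_sum
      (Finset.univ.filter (fun j : Fin n => ¬ T.degree j = 1)) (fun j => T.degree j) 2
      (fun j hj => by
        have hj1 : T.degree j ≠ 1 := (Finset.mem_filter.mp hj).2
        have hj0 : 0 < T.degree j := degree_pos_aux hT.isConnected (by omega) j
        show 2 ≤ T.degree j
        omega)
    simpa [mul_comm] using this
  have h3 := Finset.card_filter_add_card_filter_not
    (s := (Finset.univ : Finset (Fin n))) (p := fun j : Fin n => T.degree j = 1)
  rw [Finset.card_univ, Fintype.card_fin] at h3
  omega

end Aux4
section Aux5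

variable {n : ℕ} (T : SimpleGraph (Fin n)) [DecidableRel T.Adj]

private noncomputable def lw (w : Sym2 (Fin n) → ℝ) (i : Fin n) : ℝ :=
  if T.degree i = 1 then ∑ e ∈ T.edgeFinset.filter (fun e => i ∈ e), w e else 0

private noncomputable def lB : Finset (Sym2 (Fin n)) :=
  (Finset.univ.filter (fun j : Fin n => T.degree j = 1)).biUnion
    (fun j => T.edgeFinset.filter (fun e => j ∈ e))

variable {T} {w : Sym2 (Fin n) → ℝ}

private lemma lw_nonneg (hw : PosWeighted T w) (i : Fin n) : 0 ≤ lw T w i := by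
  unfold lw
  split
  · exact Finset.sum_nonneg fun e he =>
      (hw e (mem_edgeFinset.mp (Finset.mem_filter.mp he).1)).le
  · exact le_refl 0

private lemma lw_pos (hn : 3 ≤ n) (hT : T.IsTree) (hw : PosWeighted T w) {i : Fin n}
    (hdeg : T.degree i = 1) : 0 < lw T w i := by
  unfold lw
  rw [if_pos hdeg]
  apply Finset.sum_pos
  · exact fun e he => hw e (mem_edgeFinset.mp (Finset.mem_filter.mp he).1)
  · have h0 : 0 < T.degree i := by omega
    obtain ⟨x, hx⟩ := (T.degree_pos_iff_exists_adj i).mp h0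
    exact ⟨s(i, x), Finset.mem_filter.mpr ⟨mem_edgeFinset.mpr hx, by simp⟩⟩

private lemma lw_eq_zero {i : Fin n} (hdeg : T.degree i ≠ 1) : lw T w i = 0 :=
  if_neg hdeg

private lemma lB_subset : lB T ⊆ T.edgeFinset :=
  Finset.biUnion_subset.mpr fun j _ => Finset.filter_subset _ _

private lemma sum_lw_eq (hn : 3 ≤ n) (hT : T.IsTree) :
    ∑ j, lw T w j = ∑ e ∈ lB T, w e := by
  classical
  have hdisj : (↑(Finset.univ.filter (fun j : Fin n => T.degree j = 1)) :
      Set (Fin n)).PairwiseDisjoint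
      (fun j => T.edgeFinset.filter (fun e => j ∈ e)) := by
    intro j hj k hk hjk
    simp only [Finset.coe_filter, Set.mem_setOf_eq] at hj hk
    rw [Function.onFun, Finset.disjoint_left]
    intro e he1 he2
    rw [Finset.mem_filter] at he1 he2
    have hadj : T.Adj j k :=
      adj_of_two_mem (mem_edgeFinset.mp he1.1) he1.2 he2.2 hjk
    exact not_adj_leaves hT hn hadj hj.2 hk.2
  rw [lB, Finset.sum_biUnion hdisj]
  rw [← Finset.sum_filter_add_sum_filter_not Finset.univ
    (fun j : Fin n => T.degree j = 1) (lw T w)]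
  have h2 : ∑ j ∈ Finset.univ.filter (fun j : Fin n => ¬ T.degree j = 1), lw T w j
      = 0 :=
    Finset.sum_eq_zero fun j hj => lw_eq_zero (Finset.mem_filter.mp hj).2
  rw [h2, add_zero]
  apply Finset.sum_congr rfl
  intro j hj
  exact if_pos (Finset.mem_filter.mp hj).2

private lemma sum_lw_le (hn : 3 ≤ n) (hT : T.IsTree) (hw : PosWeighted T w) :
    ∑ j, lw T w j ≤ ∑ e ∈ T.edgeFinset, w e := by
  rw [sum_lw_eq hn hT]
  exact Finset.sum_le_sum_of_subset_of_nonneg lB_subset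
    (fun e he _ => (hw e (mem_edgeFinset.mp he)).le)

private lemma sum_lw_lt (hn : 3 ≤ n) (hT : T.IsTree) (hw : PosWeighted T w)
    {u v : Fin n} (huv : u ≠ v) (hu : 2 ≤ T.degree u) (hv : 2 ≤ T.degree v) :
    ∑ j, lw T w j < ∑ e ∈ T.edgeFinset, w e := by
  classical
  obtain ⟨p, hp, -⟩ := hT.existsUnique_path u v
  have hnil : ¬ p.Nil := SimpleGraph.Walk.not_nil_of_ne huv
  have hlen : 0 < p.length := SimpleGraph.Walk.not_nil_iff_lt_length.mp hnil
  have hadj : T.Adj u (p.getVert 1) := SimpleGraph.Walk.adj_snd hnil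
  set x := p.getVert 1 with hxdef
  have hx2 : 2 ≤ T.degree x := by
    by_cases hxv : x = v
    · rw [hxv]; exact hv
    · have hxs : x ∈ p.support :=
        SimpleGraph.Walk.mem_support_iff_exists_getVert.mpr ⟨1, rfl, hlen⟩
      obtain ⟨a, b, hab, ha, hb⟩ := exists_two_nbrs p hp hxs hadj.ne' hxv
      exact two_le_degree_of_two_nbrs hab ha hb
  have hemem : s(u, x) ∈ T.edgeFinset := mem_edgeFinset.mpr hadj
  have heB : s(u, x) ∉ lB T := by
    rw [lB, Finset.mem_biUnion]
    rintro ⟨j, hj1, hj2⟩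
    have hdj : T.degree j = 1 := (Finset.mem_filter.mp hj1).2
    have hjm := (Finset.mem_filter.mp hj2).2
    rw [Sym2.mem_iff] at hjm
    rcases hjm with rfl | rfl <;> omega
  rw [sum_lw_eq hn hT]
  have hsub : lB T ⊆ T.edgeFinset.erase s(u, x) := by
    intro e he
    exact Finset.mem_erase.mpr ⟨fun h => heB (h ▸ he), lB_subset he⟩
  calc ∑ e ∈ lB T, w e ≤ ∑ e ∈ T.edgeFinset.erase s(u, x), w e :=
        Finset.sum_le_sum_of_subset_of_nonneg hsub
          (fun e he _ => (hw e (mem_edgeFinset.mp (Finset.mem_of_mem_erase he))).le)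
    _ = ∑ e ∈ T.edgeFinset, w e - w s(u, x) := Finset.sum_erase_eq_sub hemem
    _ < ∑ e ∈ T.edgeFinset, w e := by
        have := hw s(u, x) (mem_edgeFinset.mp hemem)
        linarith

private lemma sum_lw_eq_of_unique (hn : 3 ≤ n) (hT : T.IsTree) {c : Fin n}
    (hall : ∀ j, j ≠ c → T.degree j = 1) :
    ∑ j, lw T w j = ∑ e ∈ T.edgeFinset, w e := by
  classical
  rw [sum_lw_eq hn hT]
  congr 1
  apply Finset.Subset.antisymm lB_subset
  intro e he
  induction e using Sym2.ind with
  | _ a b =>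
    have hadj : T.Adj a b := by
      have := mem_edgeFinset.mp he
      rwa [mem_edgeSet] at this
    rw [lB, Finset.mem_biUnion]
    by_cases hac : a = c
    · exact ⟨b, Finset.mem_filter.mpr ⟨Finset.mem_univ b,
        hall b (fun h => hadj.ne (hac.trans h.symm))⟩,
        Finset.mem_filter.mpr ⟨he, by simp⟩⟩
    · exact ⟨a, Finset.mem_filter.mpr ⟨Finset.mem_univ a, hall a hac⟩,
        Finset.mem_filter.mpr ⟨he, by simp⟩⟩

end Aux5

end Aux

theorem tree_exactly_n_vertices_ineq {n : ℕ} (hn : 3 ≤ n)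
    (T : SimpleGraph (Fin n)) (w : Sym2 (Fin n) → ℝ)
    (hT : T.IsTree) (hw : PosWeighted T w) :
    ((∀ i : Fin n, ((n : ℝ) - 2) * Dhat T w i ≤ ∑ j ∈ Finset.univ.erase i, Dhat T w j) ∧
      (∀ i i' : Fin n,
        ((n : ℝ) - 2) * Dhat T w i = ∑ j ∈ Finset.univ.erase i, Dhat T w j →
        ((n : ℝ) - 2) * Dhat T w i' = ∑ j ∈ Finset.univ.erase i', Dhat T w j →
        i = i')) ∧
    ((∃ i : Fin n, ((n : ℝ) - 2) * Dhat T w i = ∑ j ∈ Finset.univ.erase i, Dhat T w j) ∨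
      (∃ i j : Fin n, i ≠ j ∧ (∀ k, Dhat T w k ≤ Dhat T w i) ∧ Dhat T w i = Dhat T w j)) ∧
    ({i : Fin n | ∀ j, Dhat T w j ≤ Dhat T w i}.ncard ≤ n - 2) := by
  classical
  haveI hdec : DecidableRel T.Adj := Classical.decRel _
  have hconn := hT.isConnected
  set W := ∑ e ∈ T.edgeFinset, w e with hWdef
  have hD : ∀ i, Dhat T w i = W - lw T w i := by
    intro i
    rw [Dhat_eq hn hT hw i]
    rfl
  have hA_le : ∑ j, lw T w j ≤ W := sum_lw_le hn hT hw
  have hn3 : (3:ℝ) ≤ (n:ℝ) := by exact_mod_cast hn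
  set A := ∑ j, lw T w j with hAdef
  have hsum_erase : ∀ i : Fin n, ∑ j ∈ Finset.univ.erase i, Dhat T w j
      = (n:ℝ) * W - A - (W - lw T w i) := by
    intro i
    rw [Finset.sum_erase_eq_sub (Finset.mem_univ i)]
    congr 1
    · rw [Finset.sum_congr rfl (fun j _ => hD j), Finset.sum_sub_distrib,
        Finset.sum_const, Finset.card_univ, Fintype.card_fin, nsmul_eq_mul]
    · exact hD i
  have hmain : ∀ i : Fin n,
      ((n:ℝ)-2) * Dhat T w i ≤ ∑ j ∈ Finset.univ.erase i, Dhat T w j := by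
    intro i
    rw [hsum_erase i, hD i]
    have h1 : 0 ≤ lw T w i := lw_nonneg hw i
    have h2 : 0 ≤ ((n:ℝ)-1) * lw T w i :=
      mul_nonneg (by linarith) h1
    linarith [hA_le]
  have heqcond : ∀ i : Fin n,
      ((n:ℝ)-2) * Dhat T w i = ∑ j ∈ Finset.univ.erase i, Dhat T w j →
      lw T w i = 0 ∧ A = W := by
    intro i hi
    rw [hsum_erase i, hD i] at hi
    have h1 : 0 ≤ lw T w i := lw_nonneg hw i
    have h2 : 0 ≤ ((n:ℝ)-3) * lw T w i := mul_nonneg (by linarith) h1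
    have h3 : lw T w i = 0 := by nlinarith [hA_le]
    refine ⟨h3, ?_⟩
    rw [h3] at hi
    linarith [hi]
  have hdeg_of_lw : ∀ i, lw T w i = 0 → T.degree i ≠ 1 := by
    intro i h0 hdeg
    exact absurd h0 (ne_of_gt (lw_pos hn hT hw hdeg))
  have hdeg2 : ∀ i : Fin n, T.degree i ≠ 1 → 2 ≤ T.degree i := by
    intro i h
    have := degree_pos_aux hconn (by omega) i
    omega
  refine ⟨⟨hmain, ?_⟩, ?_, ?_⟩
  · -- uniqueness
    intro i i' h1 h2
    by_contra hne
    obtain ⟨hz1, hAW⟩ := heqcond i h1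
    obtain ⟨hz2, -⟩ := heqcond i' h2
    have hlt := sum_lw_lt hn hT hw hne (hdeg2 i (hdeg_of_lw i hz1))
      (hdeg2 i' (hdeg_of_lw i' hz2))
    rw [← hAdef, ← hWdef] at hlt
    linarith
  · -- part (ii)
    by_cases htwo : ∃ i j : Fin n, i ≠ j ∧ T.degree i ≠ 1 ∧ T.degree j ≠ 1
    · right
      obtain ⟨i, j, hij, hi1, hj1⟩ := htwo
      refine ⟨i, j, hij, ?_, ?_⟩
      · intro k
        rw [hD k, hD i, lw_eq_zero hi1]
        have := lw_nonneg hw k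
        linarith
      · rw [hD i, hD j, lw_eq_zero hi1, lw_eq_zero hj1]
    · left
      obtain ⟨c, hc⟩ := exists_internal hn hT
      push_neg at htwo
      have hall : ∀ j, j ≠ c → T.degree j = 1 := by
        intro j hj
        by_contra hj1
        exact hc (htwo j c hj hj1)
      refine ⟨c, ?_⟩
      have hAW : A = W := by
        have := sum_lw_eq_of_unique (w := w) hn hT hall
        rw [← hAdef, ← hWdef] at this
        exact this
      rw [hsum_erase c, hD c, lw_eq_zero hc, hAW]
      ring
  · -- part (iii)
    obtain ⟨c, hc⟩ := exists_internal hn hT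
    have hsubset : {i : Fin n | ∀ j, Dhat T w j ≤ Dhat T w i} ⊆
        ↑(Finset.univ.filter (fun j : Fin n => ¬ T.degree j = 1)) := by
      intro i hi
      simp only [Finset.coe_filter, Set.mem_setOf_eq, Finset.mem_univ, true_and]
      have h1 := hi c
      rw [hD i, hD c, lw_eq_zero hc] at h1
      have h3 : lw T w i = 0 := le_antisymm (by linarith) (lw_nonneg hw i)
      exact hdeg_of_lw i h3
    have h4 := Set.ncard_le_ncard hsubset (Set.toFinite _)
    rw [Set.ncard_coe_finset] at h4
    have h5 := two_le_card_leaves hn hT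
    have h6 := Finset.card_filter_add_card_filter_not
      (s := (Finset.univ : Finset (Fin n))) (p := fun j : Fin n => T.degree j = 1)
    rw [Finset.card_univ, Fintype.card_fin] at h6
    omega
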